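/- There is a constant C such that for all x, x₀ ∈ ℝ² with r₀ = |x₀| ≤ r/2 (r = |x| > 0, r₁ = |x - x₀|): |e^{r - r₀ - r₁} - e^{-r₀(1 - cos(θ - θ₀))}| ≤ C e^{-r₀(1 - cos(θ - θ₀))} · r₀² (θ - θ₀)² / r. -/
import Mathlib


open Real

/-- The point with Cartesian coordinates `(a, b)` in the Euclidean plane. -/
noncomputable def pt (a b : ℝ) : EuclideanSpace ℝ (Fin 2) :=
  (WithLp.equiv 2 (Fin 2 → ℝ)).symm ![a, b]

lemma pt_norm_sub_sq (a b c d : ℝ) : ‖pt a b - pt c d‖^2 = (a-c)^2 + (b-d)^2 := by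
  simp [pt, EuclideanSpace.norm_eq, Fin.sum_univ_two]
  rw [Real.sq_sqrt (by positivity)]

/-- There is C such that if x = r(cos θ, sin θ), x₀ = r₀(cos θ₀, sin θ₀)
with r > 0, 0 ≤ r₀ ≤ r/2 and r₁ = ‖x - x₀‖, then
|e^{r - r₀ - r₁} - e^{-r₀(1 - cos(θ - θ₀))}|
  ≤ C e^{-r₀(1 - cos(θ - θ₀))} r₀² (θ - θ₀)² / r. -/
theorem stmt17 :
    ∃ C : ℝ, ∀ r r₀ θ θ₀ : ℝ, 0 < r → 0 ≤ r₀ → r₀ ≤ r / 2 →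
      ∀ r₁ : ℝ, r₁ = ‖pt (r * Real.cos θ) (r * Real.sin θ) -
          pt (r₀ * Real.cos θ₀) (r₀ * Real.sin θ₀)‖ →
        |Real.exp (r - r₀ - r₁) - Real.exp (-r₀ * (1 - Real.cos (θ - θ₀)))| ≤
          C * Real.exp (-r₀ * (1 - Real.cos (θ - θ₀))) *
            (r₀ ^ 2 * (θ - θ₀) ^ 2) / r := by
  refine ⟨1, fun r r₀ θ θ₀ hr hr₀ hr₀r r₁ hr₁ => ?_⟩
  set Δ := θ - θ₀ with hΔ
  set c := Real.cos Δ with hc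
  set b := r - r₀ * c with hb
  have hc1 : c ≤ 1 := Real.cos_le_one Δ
  have hr₀c : r₀ * c ≤ r₀ := by nlinarith
  have hb2 : r / 2 ≤ b := by simp only [hb]; linarith
  have hbpos : 0 < b := by linarith
  have hr₁0 : 0 ≤ r₁ := hr₁ ▸ norm_nonneg _
  have hsq : r₁ ^ 2 = b ^ 2 + (r₀ * Real.sin Δ) ^ 2 := by
    have := pt_norm_sub_sq (r * Real.cos θ) (r * Real.sin θ)
      (r₀ * Real.cos θ₀) (r₀ * Real.sin θ₀)
    rw [← hr₁] at this
    have hcs : Real.cos θ * Real.cos θ₀ + Real.sin θ * Real.sin θ₀ = c := by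
      rw [hc, hΔ, Real.cos_sub]
    have hs2 : (Real.sin θ)^2 = 1 - (Real.cos θ)^2 := by
      have := Real.sin_sq_add_cos_sq θ; linarith
    have hs02 : (Real.sin θ₀)^2 = 1 - (Real.cos θ₀)^2 := by
      have := Real.sin_sq_add_cos_sq θ₀; linarith
    have hsΔ2 : (Real.sin Δ)^2 = 1 - c^2 := by
      have := Real.sin_sq_add_cos_sq Δ; rw [← hc] at this; linarith
    rw [this]
    rw [hc] at hcs
    simp only [hb, hc, hΔ]
    linear_combination (r^2) * Real.sin_sq_add_cos_sq θ + r₀^2 * Real.sin_sq_add_cos_sq θ₀ -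
      r₀^2 * Real.sin_sq_add_cos_sq (θ - θ₀) - 2*r*r₀*hcs
  have hbr₁ : b ≤ r₁ := by nlinarith [sq_nonneg (r₀ * Real.sin Δ)]
  set δ := r₁ - b with hδ
  have hδ0 : 0 ≤ δ := by linarith
  have hδeq : δ * (r₁ + b) = (r₀ * Real.sin Δ) ^ 2 := by
    have : r₁ ^ 2 - b ^ 2 = (r₀ * Real.sin Δ) ^ 2 := by linarith
    nlinarith [this]
  have hden : r ≤ r₁ + b := by
    have : r₀ * c ≤ r₁ := le_trans hr₀c (le_trans (by linarith) hbr₁)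
    simp only [hb]; linarith
  have hsin : (Real.sin Δ) ^ 2 ≤ Δ ^ 2 := Real.sin_sq_le_sq
  have hδle : δ ≤ r₀ ^ 2 * Δ ^ 2 / r := by
    rw [le_div_iff₀ hr]
    have h1 : δ * r ≤ δ * (r₁ + b) := by nlinarith
    have h2 : r₀ ^ 2 * (Real.sin Δ) ^ 2 ≤ r₀ ^ 2 * Δ ^ 2 :=
      mul_le_mul_of_nonneg_left hsin (sq_nonneg r₀)
    nlinarith [h1, hδeq, h2]
  have hexp : Real.exp (r - r₀ - r₁) =
      Real.exp (-r₀ * (1 - c)) * Real.exp (-δ) := by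
    rw [← Real.exp_add]; congr 1; simp only [hδ, hb]; ring
  have hEpos : 0 < Real.exp (-r₀ * (1 - c)) := Real.exp_pos _
  have key : |Real.exp (r - r₀ - r₁) - Real.exp (-r₀ * (1 - c))| ≤
      Real.exp (-r₀ * (1 - c)) * δ := by
    rw [hexp, ← mul_one (Real.exp (-r₀ * (1 - c))) , mul_assoc, ← mul_sub,
      abs_mul, abs_of_pos hEpos, one_mul]
    have h1 : Real.exp (-δ) ≤ 1 := Real.exp_le_one_iff.mpr (by linarith)
    have h2 : 1 - δ ≤ Real.exp (-δ) := by
      have := Real.add_one_le_exp (-δ); linarith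
    rw [abs_sub_comm, abs_of_nonneg (by linarith)]
    have := mul_le_mul_of_nonneg_left (by linarith : 1 - Real.exp (-δ) ≤ δ)
      (le_of_lt hEpos)
    linarith
  calc |Real.exp (r - r₀ - r₁) - Real.exp (-r₀ * (1 - c))|
      ≤ Real.exp (-r₀ * (1 - c)) * δ := key
    _ ≤ Real.exp (-r₀ * (1 - c)) * (r₀ ^ 2 * Δ ^ 2 / r) := by
        exact mul_le_mul_of_nonneg_left hδle (le_of_lt hEpos)
    _ = 1 * Real.exp (-r₀ * (1 - c)) * (r₀ ^ 2 * Δ ^ 2) / r := by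
        rw [one_mul]; ring
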